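/- Let Z = X ∪ Y be a finite nonempty set of even integers with 0 ∈ Z, where X = {x₁, …, x_l} is the set of non-negative elements and Y = {−y₁, …, −y_m} is the set of negative elements of Z, both nonempty, with Z ≠ {0}. Let L = x₁ + ⋯ + x_l, M = y₁ + ⋯ + y_m and n = lM + mL. Then the minimal order of a tournament whose imbalance set is Z is at most n + 1. -/

import Mathlib

/-- A tournament on `Fin n`: loopless, and between any two distinct vertices
there is exactly one arc. -/
def IsTournament {n : ℕ} (r : Fin n → Fin n → Bool) : Prop :=
  (∀ i, r i i = false) ∧ ∀ i j : Fin n, i ≠ j → (r i j = !(r j i))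

/-- The score (outdegree) of vertex `i`. -/
def outdeg {n : ℕ} (r : Fin n → Fin n → Bool) (i : Fin n) : ℕ :=
  (Finset.univ.filter fun j => r i j = true).card

/-- The indegree of vertex `i`. -/
def indeg {n : ℕ} (r : Fin n → Fin n → Bool) (i : Fin n) : ℕ :=
  (Finset.univ.filter fun j => r j i = true).card

/-- The imbalance of vertex `i`: outdegree minus indegree. -/
def imbalance {n : ℕ} (r : Fin n → Fin n → Bool) (i : Fin n) : ℤ :=
  (outdeg r i : ℤ) - (indeg r i : ℤ)

/-- The imbalance set of a digraph. -/
def imbalanceSet {n : ℕ} (r : Fin n → Fin n → Bool) : Finset ℤ :=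
  Finset.image (imbalance r) Finset.univ


open Finset

namespace TournAux

variable (X Y : Finset ℤ)

abbrev B := (↥Y × ↥X) ⊕ (↥X × ↥Y)

def sz : B X Y → ℕ
  | .inl p => p.2.1.toNat
  | .inr p => (-p.2.1).toNat

def opp : B X Y → B X Y
  | .inl p => .inr (p.2, p.1)
  | .inr p => .inl (p.2, p.1)

def isP : B X Y → Bool
  | .inl _ => false
  | .inr _ => true

def bval : B X Y → ℤ
  | .inl p => p.1.1
  | .inr p => p.1.1

abbrev W := Σ b : B X Y, Fin (sz X Y b)

abbrev V := W X Y ⊕ Unit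

noncomputable def κ : W X Y → ℕ := fun w => Nat.pair (Fintype.equivFin (B X Y) w.1) (w.2.1 / 2)

def ε : W X Y → ℕ := fun w => w.2.1 % 2

variable {X Y}

lemma opp_opp (b : B X Y) : opp X Y (opp X Y b) = b := by cases b <;> rfl
lemma opp_ne (b : B X Y) : opp X Y b ≠ b := by cases b <;> simp [opp]
lemma isP_opp (b : B X Y) : isP X Y (opp X Y b) = !isP X Y b := by cases b <;> rfl

lemma kappa_eq_iff (w u : W X Y) : κ X Y w = κ X Y u ↔ (w.1 = u.1 ∧ w.2.1 / 2 = u.2.1 / 2) := by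
  unfold κ
  rw [Nat.pair_eq_pair]
  exact ⟨fun ⟨h1, h2⟩ => ⟨(Fintype.equivFin (B X Y)).injective (Fin.ext h1), h2⟩,
    fun ⟨h1, h2⟩ => ⟨by rw [h1], h2⟩⟩

lemma eq_of_parts {w u : W X Y} (h1 : w.1 = u.1) (h2 : w.2.1 = u.2.1) : w = u := by
  rcases w with ⟨b, k⟩; rcases u with ⟨b', k'⟩
  dsimp at h1 h2; subst h1; simp [Fin.ext h2]

lemma eps_lt (w : W X Y) : ε X Y w < 2 := Nat.mod_lt _ (by norm_num)

variable (X Y)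

def pk {c : ℕ} (k : Fin c) : Fin c :=
  ⟨if k.1 % 2 = 0 then (k.1 + 1) % c else k.1 - 1, by
    split
    · exact Nat.mod_lt _ k.pos
    · exact lt_of_le_of_lt (Nat.sub_le _ _) k.2⟩

variable {X Y}

lemma pk_val {c : ℕ} (hc : c % 2 = 0) (k : Fin c) :
    (pk k).1 = if k.1 % 2 = 0 then k.1 + 1 else k.1 - 1 := by
  have h2 := k.2
  unfold pk
  dsimp only
  split
  · next h => rw [Nat.mod_eq_of_lt (by omega)]
  · rfl

lemma pk_pk {c : ℕ} (hc : c % 2 = 0) (k : Fin c) : pk (pk k) = k := by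
  have h1 := pk_val hc k
  have h2 := pk_val hc (pk k)
  have h3 := k.2
  apply Fin.ext
  by_cases hk : k.1 % 2 = 0
  · rw [if_pos hk] at h1
    rw [if_neg (by omega : ¬ (pk k).1 % 2 = 0)] at h2
    omega
  · rw [if_neg hk] at h1
    rw [if_pos (by omega : (pk k).1 % 2 = 0)] at h2
    omega

lemma pk_ne {c : ℕ} (hc : c % 2 = 0) (k : Fin c) : pk k ≠ k := by
  have h1 := pk_val hc k
  have h3 := k.2
  intro h
  rw [h] at h1
  by_cases hk : k.1 % 2 = 0 <;> simp only [hk, if_true, if_false] at h1 <;> omega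

lemma pk_mod {c : ℕ} (hc : c % 2 = 0) (k : Fin c) : (pk k).1 % 2 ≠ k.1 % 2 := by
  have h1 := pk_val hc k
  have h3 := k.2
  by_cases hk : k.1 % 2 = 0 <;> simp only [hk, if_true, if_false] at h1 <;> omega

lemma pk_div {c : ℕ} (hc : c % 2 = 0) (k : Fin c) : (pk k).1 / 2 = k.1 / 2 := by
  have h1 := pk_val hc k
  have h3 := k.2
  by_cases hk : k.1 % 2 = 0 <;> simp only [hk, if_true, if_false] at h1 <;> omega

variable (X Y)

noncomputable def sW (w u : W X Y) : Bool :=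
  if w = u then false
  else if u.1 = opp X Y w.1 then isP X Y w.1
  else if κ X Y w = κ X Y u then decide (ε X Y w = 0)
  else decide (ε X Y w = ε X Y u) == decide (κ X Y w < κ X Y u)

noncomputable def s : V X Y → V X Y → Bool
  | .inl w, .inl u => sW X Y w u
  | .inl w, .inr _ => decide (ε X Y w ≠ 0)
  | .inr _, .inl u => decide (ε X Y u = 0)
  | .inr _, .inr _ => false

variable {X Y}

lemma s_irrefl (v : V X Y) : s X Y v v = false := by
  cases v with
  | inl w => simp [s, sW]
  | inr u => rfl

lemma sW_antisymm {w u : W X Y} (h : w ≠ u) : sW X Y w u = !sW X Y u w := by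
  unfold sW
  rw [if_neg h, if_neg (Ne.symm h)]
  by_cases hm : u.1 = opp X Y w.1
  · have hm' : w.1 = opp X Y u.1 := by rw [hm, opp_opp]
    rw [if_pos hm, if_pos hm', hm, isP_opp, Bool.not_not]
  · have hm' : ¬ w.1 = opp X Y u.1 := fun hw => hm (by rw [hw, opp_opp])
    rw [if_neg hm, if_neg hm']
    by_cases hκ : κ X Y w = κ X Y u
    · rw [if_pos hκ, if_pos hκ.symm]
      obtain ⟨hb, hd⟩ := (kappa_eq_iff w u).1 hκ
      have hval : w.2.1 ≠ u.2.1 := fun hv => h (eq_of_parts hb hv)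
      have he1 := eps_lt (X := X) (Y := Y) w
      have he2 := eps_lt (X := X) (Y := Y) u
      have hne : ε X Y w ≠ ε X Y u := by
        unfold ε at *
        omega
      by_cases h1 : ε X Y w = 0 <;> by_cases h2 : ε X Y u = 0 <;> simp [h1, h2] <;> omega
    · rw [if_neg hκ, if_neg (Ne.symm hκ)]
      have hee : (ε X Y u = ε X Y w) = (ε X Y w = ε X Y u) := propext ⟨Eq.symm, Eq.symm⟩
      rcases lt_or_gt_of_ne hκ with hlt | hlt
      · have h2 : ¬ κ X Y u < κ X Y w := Nat.lt_asymm hlt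
        by_cases he : ε X Y w = ε X Y u <;> simp [he, hee, hlt, h2]
      · have h2 : ¬ κ X Y w < κ X Y u := Nat.lt_asymm hlt
        by_cases he : ε X Y w = ε X Y u <;> simp [he, hee, hlt, h2]

lemma s_antisymm {v u : V X Y} (h : v ≠ u) : s X Y v u = !s X Y u v := by
  cases v with
  | inl w =>
    cases u with
    | inl u' => exact sW_antisymm (fun he => h (by rw [he]))
    | inr u' => by_cases he : ε X Y w = 0 <;> simp [s, he]
  | inr w =>
    cases u with
    | inl u' => by_cases he : ε X Y u' = 0 <;> simp [s, he]
    | inr u' => exact absurd rfl h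

variable (X Y)

noncomputable def chi (v u : V X Y) : ℤ := if u = v then 0 else if s X Y v u then 1 else -1

variable {X Y}

lemma chi_self (v : V X Y) : chi X Y v v = 0 := if_pos rfl

lemma class_eq {c : ℕ} (hc : c % 2 = 0) {k k0 : Fin c} (hd : k.1 / 2 = k0.1 / 2) :
    k = k0 ∨ k = pk k0 := by
  have h1 := pk_val hc k0
  have h2 := k.2
  have h3 := k0.2
  by_cases hk : k.1 = k0.1
  · exact Or.inl (Fin.ext hk)
  · right
    apply Fin.ext
    by_cases hh : k0.1 % 2 = 0 <;> simp only [hh, if_true, if_false] at h1 <;> omega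

lemma sum_pk_cancel {c : ℕ} (hc : c % 2 = 0) (f : Fin c → ℤ)
    (hf : ∀ k, f (pk k) = - f k) : ∑ k, f k = 0 := by
  refine Finset.sum_involution (fun k _ => pk k) (fun k _ => by rw [hf k]; ring)
    (fun k _ _ => pk_ne hc k) (fun k _ => mem_univ _) (fun k _ => pk_pk hc k)

lemma sum_pk_pair {c : ℕ} (hc : c % 2 = 0) (f : Fin c → ℤ) (k0 : Fin c)
    (hf : ∀ k : Fin c, k.1 / 2 ≠ k0.1 / 2 → f (pk k) = - f k) :
    ∑ k, f k = f k0 + f (pk k0) := by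
  rw [← Finset.add_sum_erase _ f (mem_univ k0)]
  congr 1
  rw [← Finset.add_sum_erase _ f (mem_erase.2 ⟨pk_ne hc k0, mem_univ _⟩)]
  have hzero : ∑ k ∈ (univ.erase k0).erase (pk k0), f k = 0 := by
    have hdiv : ∀ k : Fin c, k ∈ (univ.erase k0).erase (pk k0) → k.1 / 2 ≠ k0.1 / 2 := by
      intro k hk hd
      simp only [mem_erase, mem_univ, and_true] at hk
      rcases class_eq hc hd with h | h
      · exact hk.2 h
      · exact hk.1 h
    refine Finset.sum_involution (fun k _ => pk k) (fun k hk => by rw [hf k (hdiv k hk)]; ring)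
      (fun k _ _ => pk_ne hc k) ?_ (fun k _ => pk_pk hc k)
    intro k hk
    simp only [mem_erase, mem_univ, and_true] at hk ⊢
    exact ⟨fun h => hk.2 (by rw [← pk_pk hc k, h, pk_pk hc]),
      fun h => hk.1 (by rw [← pk_pk hc k, h])⟩
  rw [hzero, add_zero]

lemma chi_inl_ne {w u : W X Y} (h : u ≠ w) :
    chi X Y (.inl w) (.inl u) = if sW X Y w u then 1 else -1 := by
  unfold chi
  rw [if_neg (by simpa using h)]
  rfl

lemma chi_opp (w u : W X Y) (hu : u.1 = opp X Y w.1) :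
    chi X Y (.inl w) (.inl u) = if isP X Y w.1 then 1 else -1 := by
  have hne : u ≠ w := fun h => opp_ne w.1 (by rw [← hu, h])
  rw [chi_inl_ne hne]
  unfold sW
  rw [if_neg (Ne.symm hne), if_pos hu]

lemma chi_pair (hsz : ∀ b : B X Y, sz X Y b % 2 = 0) (w : W X Y) :
    chi X Y (.inl w) (.inl ⟨w.1, pk w.2⟩) = if ε X Y w = 0 then 1 else -1 := by
  set u : W X Y := ⟨w.1, pk w.2⟩ with hu
  have hne : u ≠ w := by
    intro h
    have : (pk w.2).1 = w.2.1 := by rw [← Sigma.eta w] at h; exact congrArg (fun z => z.2.1) h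
    exact pk_ne (hsz w.1) w.2 (Fin.ext this)
  rw [chi_inl_ne hne]
  unfold sW
  rw [if_neg (Ne.symm hne), if_neg (show ¬ u.1 = opp X Y w.1 from Ne.symm (opp_ne w.1)),
    if_pos ((kappa_eq_iff w u).2 ⟨rfl, (pk_div (hsz w.1) w.2).symm⟩)]
  cases hd : decide (ε X Y w = 0) <;> simp_all

lemma chi_flip (hsz : ∀ b : B X Y, sz X Y b % 2 = 0) (w u : W X Y)
    (hm : ¬ u.1 = opp X Y w.1) (hκ : κ X Y w ≠ κ X Y u) :
    chi X Y (.inl w) (.inl ⟨u.1, pk u.2⟩) = - chi X Y (.inl w) (.inl u) := by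
  set u' : W X Y := ⟨u.1, pk u.2⟩ with hu'
  have hκ' : κ X Y u' = κ X Y u := (kappa_eq_iff u' u).2 ⟨rfl, pk_div (hsz u.1) u.2⟩
  have hww : u ≠ w := fun h => hκ (by rw [h])
  have hww' : u' ≠ w := fun h => hκ (by rw [← hκ', h])
  rw [chi_inl_ne hww, chi_inl_ne hww']
  have hk1 : ¬ (κ X Y w = κ X Y u') := fun h => hκ (h.trans hκ')
  unfold sW
  rw [if_neg (Ne.symm hww'), if_neg (Ne.symm hww),
    if_neg (show ¬ u'.1 = opp X Y w.1 from hm), if_neg hm,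
    if_neg hk1, if_neg hκ]
  have h1 : (κ X Y w < κ X Y u') = (κ X Y w < κ X Y u) := by rw [hκ']
  have h2 : ε X Y u' ≠ ε X Y u := pk_mod (hsz u.1) u.2
  have he1 := eps_lt u
  have he2 := eps_lt u'
  have heW := eps_lt w
  have hB' : (κ X Y w < κ X Y u') ↔ (κ X Y w < κ X Y u) := by rw [hκ']
  by_cases hA : ε X Y w = ε X Y u <;> by_cases hB : κ X Y w < κ X Y u
  · have hA' : ¬ ε X Y w = ε X Y u' := by omega
    have hB2 : κ X Y w < κ X Y u' := hB'.2 hB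
    simp [hA, hB, hA', hB2]
    omega
  · have hA' : ¬ ε X Y w = ε X Y u' := by omega
    have hB2 : ¬ κ X Y w < κ X Y u' := fun h => hB (hB'.1 h)
    simp [hA, hB, hA', hB2] <;> omega
  · have hA' : ε X Y w = ε X Y u' := by omega
    have hB2 : κ X Y w < κ X Y u' := hB'.2 hB
    simp [hA, hB, hA', hB2] <;> omega
  · have hA' : ε X Y w = ε X Y u' := by omega
    have hB2 : ¬ κ X Y w < κ X Y u' := fun h => hB (hB'.1 h)
    simp [hA, hB, hA', hB2] <;> omega

lemma chi_star_w (w : W X Y) :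
    chi X Y (.inr ()) (.inl w) = if ε X Y w = 0 then 1 else -1 := by
  unfold chi
  rw [if_neg (by simp)]
  show (if s X Y (.inr ()) (.inl w) then (1:ℤ) else -1) = _
  by_cases he : ε X Y w = 0 <;> simp [s, he]

lemma chi_w_star (w : W X Y) :
    chi X Y (.inl w) (.inr ()) = if ε X Y w = 0 then -1 else 1 := by
  unfold chi
  rw [if_neg (by simp)]
  show (if s X Y (.inl w) (.inr ()) then (1:ℤ) else -1) = _
  by_cases he : ε X Y w = 0 <;> simp [s, he]

lemma sum_chi_star (hsz : ∀ b : B X Y, sz X Y b % 2 = 0) :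
    ∑ u : V X Y, chi X Y (.inr ()) u = 0 := by
  rw [Fintype.sum_sum_type]
  have h2 : ∑ u : Unit, chi X Y (.inr ()) (.inr u) = 0 := by
    simp [chi_self]
  rw [h2, add_zero, ← univ_sigma_univ, sum_sigma]
  refine Finset.sum_eq_zero fun b _ => ?_
  refine sum_pk_cancel (hsz b) _ fun k => ?_
  rw [chi_star_w, chi_star_w]
  have h3 := pk_mod (hsz b) k
  show (if ε X Y (⟨b, pk k⟩ : W X Y) = 0 then (1:ℤ) else -1) = _
  have h4 : ε X Y (⟨b, pk k⟩ : W X Y) = (pk k).1 % 2 := rfl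
  have h5 : ε X Y (⟨b, k⟩ : W X Y) = k.1 % 2 := rfl
  have h6 := Nat.mod_lt k.1 (show 0 < 2 by norm_num)
  have h7 := Nat.mod_lt (pk k).1 (show 0 < 2 by norm_num)
  by_cases hk : k.1 % 2 = 0 <;> simp [h4, h5, hk] <;> omega

lemma sum_chi_inl (hsz : ∀ b : B X Y, sz X Y b % 2 = 0) (w : W X Y) :
    ∑ u : V X Y, chi X Y (.inl w) u =
      if isP X Y w.1 then (sz X Y (opp X Y w.1) : ℤ) else -(sz X Y (opp X Y w.1)) := by
  rw [Fintype.sum_sum_type]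
  have hstar : ∑ u : Unit, chi X Y (.inl w) (.inr u) = if ε X Y w = 0 then -1 else 1 := by
    simp [chi_w_star]
  rw [hstar, ← univ_sigma_univ, sum_sigma]
  have hg : ∀ b : B X Y, ∑ k : Fin (sz X Y b), chi X Y (.inl w) (.inl ⟨b, k⟩) =
      (if b = opp X Y w.1 then
        (if isP X Y w.1 then (sz X Y (opp X Y w.1) : ℤ) else -(sz X Y (opp X Y w.1))) else 0)
      + (if b = w.1 then (if ε X Y w = 0 then (1:ℤ) else -1) else 0) := by
    intro b
    by_cases hb : b = opp X Y w.1
    · rw [if_pos hb, if_neg (show ¬ b = w.1 from by rw [hb]; exact opp_ne w.1), add_zero]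
      subst hb
      have hc : ∀ k : Fin (sz X Y (opp X Y w.1)),
          chi X Y (.inl w) (.inl ⟨opp X Y w.1, k⟩) = (if isP X Y w.1 then (1:ℤ) else -1) :=
        fun k => chi_opp w ⟨opp X Y w.1, k⟩ rfl
      rw [Finset.sum_congr rfl (fun k _ => hc k), Finset.sum_const,
        card_univ, Fintype.card_fin]
      cases hp : isP X Y w.1 <;> simp [hp]
    · rw [if_neg hb]
      by_cases hw : b = w.1
      · rw [if_pos hw, zero_add]
        rcases w with ⟨bw, kw⟩
        simp only at hw hb ⊢
        subst hw
        have hsum := sum_pk_pair (hsz b) (fun k => chi X Y (.inl ⟨b, kw⟩) (.inl ⟨b, k⟩)) kw ?_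
        · rw [hsum]
          have h0 : chi X Y (.inl (⟨b, kw⟩ : W X Y)) (.inl ⟨b, kw⟩) = 0 := chi_self _
          rw [h0, zero_add]
          exact chi_pair hsz (⟨b, kw⟩ : W X Y)
        · intro k hd
          refine chi_flip hsz ⟨b, kw⟩ ⟨b, k⟩ hb ?_
          intro hκ
          obtain ⟨_, hdd⟩ := (kappa_eq_iff (⟨b, kw⟩ : W X Y) ⟨b, k⟩).1 hκ
          exact hd (by exact hdd.symm)
      · rw [if_neg hw, add_zero]
        refine sum_pk_cancel (hsz b) _ fun k => ?_
        refine chi_flip hsz w ⟨b, k⟩ hb ?_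
        intro hκ
        obtain ⟨hbb, _⟩ := (kappa_eq_iff w ⟨b, k⟩).1 hκ
        exact hw hbb.symm
  rw [Finset.sum_congr rfl (fun b _ => hg b), Finset.sum_add_distrib,
    Finset.sum_ite_eq' univ (opp X Y w.1), Finset.sum_ite_eq' univ w.1]
  simp only [mem_univ, if_true]
  by_cases he : ε X Y w = 0 <;> cases hp : isP X Y w.1 <;> simp [he, hp]

lemma imbalance_eq_sum {N : ℕ} (r : Fin N → Fin N → Bool) (hr : IsTournament r) (i : Fin N) :
    imbalance r i = ∑ j, (if j = i then (0:ℤ) else if r i j then 1 else -1) := by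
  unfold imbalance outdeg indeg
  rw [card_filter, card_filter]
  push_cast
  rw [← Finset.sum_sub_distrib]
  refine Finset.sum_congr rfl fun j _ => ?_
  by_cases hj : j = i
  · subst hj
    simp [hr.1 j]
  · have h2 := hr.2 i j (Ne.symm hj)
    cases hji : r j i <;> rw [hji] at h2 <;> simp at h2 <;> simp [hj, h2, hji]

lemma transported (k : ℕ) (e : Fin k ≃ V X Y) :
    IsTournament (fun i j => s X Y (e i) (e j)) ∧
    imbalanceSet (fun i j => s X Y (e i) (e j)) =
      Finset.image (fun v : V X Y => ∑ u, chi X Y v u) univ := by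
  have ht : IsTournament (fun i j => s X Y (e i) (e j)) :=
    ⟨fun i => s_irrefl _, fun i j hij => s_antisymm (fun h => hij (e.injective h))⟩
  refine ⟨ht, ?_⟩
  unfold imbalanceSet
  have him : ∀ i, imbalance (fun i j => s X Y (e i) (e j)) i = ∑ u, chi X Y (e i) u := by
    intro i
    rw [imbalance_eq_sum _ ht i, ← Equiv.sum_comp e (fun u => chi X Y (e i) u)]
    refine Finset.sum_congr rfl fun j _ => ?_
    unfold chi
    by_cases hj : j = i
    · simp [hj]
    · rw [if_neg hj, if_neg (fun h => hj (e.injective h))]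
  classical
  calc Finset.image (imbalance fun i j => s X Y (e i) (e j)) univ
      = Finset.image ((fun v : V X Y => ∑ u, chi X Y v u) ∘ e) univ := by
        refine Finset.image_congr fun i _ => him i
    _ = Finset.image (fun v : V X Y => ∑ u, chi X Y v u) (Finset.image e univ) := by
        rw [Finset.image_image]
    _ = Finset.image (fun v : V X Y => ∑ u, chi X Y v u) univ := by
        congr 1
        exact Finset.image_univ_equiv e

end TournAux

/-- In the even case with `0 ∈ Z`, the minimal order of a
tournament with imbalance set `Z = X ∪ Y` is at most `n + 1`. -/
theorem even_min_order_le_of_zero_mem (Z X Y : Finset ℤ)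
    (hZne : Z.Nonempty) (heven : ∀ z ∈ Z, Even z) (h0 : (0 : ℤ) ∈ Z)
    (hZ : Z = X ∪ Y) (hXne : X.Nonempty) (hYne : Y.Nonempty)
    (hX : ∀ x ∈ X, 0 ≤ x) (hY : ∀ y ∈ Y, y < 0) (hZ0 : Z ≠ {0})
    (L M : ℤ) (hL : L = ∑ x ∈ X, x) (hM : M = ∑ y ∈ Y, -y)
    (n : ℕ) (hn : (n : ℤ) = X.card * M + Y.card * L) :
    sInf {k : ℕ | ∃ r : Fin k → Fin k → Bool,
      IsTournament r ∧ imbalanceSet r = Z} ≤ n + 1 := by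
  classical
  by_cases hpos : ∃ x ∈ X, 0 < x
  · -- main case: construct the tournament on n+1 vertices
    obtain ⟨x0, hx0X, hx0pos⟩ := hpos
    obtain ⟨y0, hy0Y⟩ := hYne
    have hsz : ∀ b : TournAux.B X Y, TournAux.sz X Y b % 2 = 0 := by
      intro b
      cases b with
      | inl p =>
        obtain ⟨t, ht⟩ := heven p.2.1 (hZ ▸ Finset.mem_union_left _ p.2.2)
        have := hX p.2.1 p.2.2
        show (p.2.1).toNat % 2 = 0
        omega
      | inr p =>
        obtain ⟨t, ht⟩ := heven p.2.1 (hZ ▸ Finset.mem_union_right _ p.2.2)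
        have := hY p.2.1 p.2.2
        show (-(p.2.1)).toNat % 2 = 0
        omega
    have h6 : ∑ x ∈ X, ((x.toNat : ℤ)) = L := by
      rw [hL]
      exact Finset.sum_congr rfl fun x hx => Int.toNat_of_nonneg (hX x hx)
    have h7 : ∑ y ∈ Y, (((-y).toNat : ℤ)) = M := by
      rw [hM]
      exact Finset.sum_congr rfl fun y hy =>
        Int.toNat_of_nonneg (neg_nonneg.2 (le_of_lt (hY y hy)))
    have hNat : Fintype.card (TournAux.V X Y) =
        Y.card * (∑ x ∈ X, x.toNat) + X.card * (∑ y ∈ Y, (-y).toNat) + 1 := by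
      have h1 : Fintype.card (TournAux.V X Y) = Fintype.card (TournAux.W X Y) + 1 := by
        rw [Fintype.card_sum]
        rfl
      have h2 : Fintype.card (TournAux.W X Y) = ∑ b : TournAux.B X Y, TournAux.sz X Y b := by
        rw [Fintype.card_sigma]
        simp
      have h3 : ∑ b : TournAux.B X Y, TournAux.sz X Y b
          = Y.card * (∑ x ∈ X, x.toNat) + X.card * (∑ y ∈ Y, (-y).toNat) := by
        rw [Fintype.sum_sum_type]
        congr 1
        · show ∑ p : ↥Y × ↥X, (p.2.1).toNat = _
          rw [Fintype.sum_prod_type]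
          have : ∀ y : ↥Y, (∑ x : ↥X, (x.1).toNat) = ∑ x ∈ X, x.toNat :=
            fun y => Finset.sum_coe_sort X (fun x => x.toNat)
          rw [Finset.sum_congr rfl fun y _ => this y, Finset.sum_const, Finset.card_univ,
            Fintype.card_coe, smul_eq_mul]
        · show ∑ p : ↥X × ↥Y, (-(p.2.1)).toNat = _
          rw [Fintype.sum_prod_type]
          have : ∀ x : ↥X, (∑ y : ↥Y, (-(y.1)).toNat) = ∑ y ∈ Y, (-y).toNat :=
            fun x => Finset.sum_coe_sort Y (fun y => (-y).toNat)
          rw [Finset.sum_congr rfl fun x _ => this x, Finset.sum_const, Finset.card_univ,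
            Fintype.card_coe, smul_eq_mul]
      rw [h1, h2, h3]
    have hcard : Fintype.card (TournAux.V X Y) = n + 1 := by
      have hc2 : ((Fintype.card (TournAux.V X Y)) : ℤ) = ((n : ℤ)) + 1 := by
        rw [hNat, hn]
        push_cast
        rw [h6, h7]
        ring
      exact_mod_cast hc2
    have e : Fin (n + 1) ≃ TournAux.V X Y := (Fintype.equivFinOfCardEq hcard).symm
    obtain ⟨ht, hset⟩ := TournAux.transported (n + 1) e
    have himage : Finset.image (fun v : TournAux.V X Y => ∑ u, TournAux.chi X Y v u)
        Finset.univ = Z := by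
      ext z
      simp only [Finset.mem_image, Finset.mem_univ, true_and]
      constructor
      · rintro ⟨v, rfl⟩
        cases v with
        | inr u =>
          cases u
          rw [TournAux.sum_chi_star hsz]
          exact h0
        | inl w =>
          rw [TournAux.sum_chi_inl hsz w]
          rcases w with ⟨b, kk⟩
          cases b with
          | inl p =>
            have hyz : p.1.1 ∈ Y := p.1.2
            have hyneg := hY _ hyz
            have hv : (if TournAux.isP X Y ((Sum.inl p : TournAux.B X Y))
                then ((TournAux.sz X Y (TournAux.opp X Y (Sum.inl p)) : ℤ))
                else -(TournAux.sz X Y (TournAux.opp X Y (Sum.inl p)))) = p.1.1 := by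
              show -(((-(p.1.1)).toNat : ℤ)) = p.1.1
              omega
            rw [hv]
            exact hZ ▸ Finset.mem_union_right _ hyz
          | inr p =>
            have hxz : p.1.1 ∈ X := p.1.2
            have hxpos := hX _ hxz
            have hv : (if TournAux.isP X Y ((Sum.inr p : TournAux.B X Y))
                then ((TournAux.sz X Y (TournAux.opp X Y (Sum.inr p)) : ℤ))
                else -(TournAux.sz X Y (TournAux.opp X Y (Sum.inr p)))) = p.1.1 := by
              show (((p.1.1).toNat : ℤ)) = p.1.1
              omega
            rw [hv]
            exact hZ ▸ Finset.mem_union_left _ hxz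
      · intro hz
        rcases Finset.mem_union.1 (hZ ▸ hz) with hzX | hzY
        · have hfib : 0 < (-y0).toNat := by
            have := hY y0 hy0Y
            omega
          refine ⟨Sum.inl ⟨Sum.inr (⟨z, hzX⟩, ⟨y0, hy0Y⟩), ⟨0, hfib⟩⟩, ?_⟩
          rw [TournAux.sum_chi_inl hsz]
          show (((z.toNat : ℤ))) = z
          have := hX z hzX
          omega
        · have hfib : 0 < x0.toNat := by omega
          refine ⟨Sum.inl ⟨Sum.inl (⟨z, hzY⟩, ⟨x0, hx0X⟩), ⟨0, hfib⟩⟩, ?_⟩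
          rw [TournAux.sum_chi_inl hsz]
          show -((((-z).toNat : ℤ))) = z
          have := hY z hzY
          omega
    exact Nat.sInf_le ⟨fun i j => TournAux.s X Y (e i) (e j), ht, by rw [hset, himage]⟩
  · -- degenerate case: X = {0}, no tournament can realize Z
    push_neg at hpos
    rcases Set.eq_empty_or_nonempty {k : ℕ | ∃ r : Fin k → Fin k → Bool,
        IsTournament r ∧ imbalanceSet r = Z} with hE | hNE
    · rw [hE, Nat.sInf_empty]
      exact Nat.zero_le _
    · exfalso
      obtain ⟨r, htr, hset⟩ := Nat.sInf_mem hNE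
      have hzero : ∀ z ∈ Z, z ≤ 0 := by
        intro z hzz
        rcases Finset.mem_union.1 (hZ ▸ hzz) with h | h
        · have := hX z h
          have := hpos z h
          omega
        · exact le_of_lt (hY z h)
      have hsum0 : ∑ i, imbalance r i = 0 := by
        unfold imbalance
        rw [Finset.sum_sub_distrib]
        have hcast : ∑ i, (outdeg r i : ℤ) = ∑ i, (indeg r i : ℤ) := by
          have hh : ∑ i, outdeg r i = ∑ i, indeg r i := by
            unfold outdeg indeg
            simp_rw [Finset.card_filter]
            exact Finset.sum_comm
          exact_mod_cast hh
        rw [hcast, sub_self]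
      have hnonpos : ∀ i ∈ Finset.univ, imbalance r i ≤ 0 := by
        intro i _
        have hmem : imbalance r i ∈ imbalanceSet r :=
          Finset.mem_image_of_mem _ (Finset.mem_univ i)
        rw [hset] at hmem
        exact hzero _ hmem
      have hall := (Finset.sum_eq_zero_iff_of_nonpos hnonpos).1 hsum0
      obtain ⟨y1, hy1⟩ := hYne
      have hy1Z : y1 ∈ Z := hZ ▸ Finset.mem_union_right _ hy1
      have hy2 : y1 ∈ Finset.image (imbalance r) Finset.univ := by
        rw [← hset] at hy1Z
        exact hy1Z
      obtain ⟨i, _, hi⟩ := Finset.mem_image.1 hy2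
      have h01 := hall i (Finset.mem_univ i)
      have hneg := hY y1 hy1
      rw [hi] at h01
      omega
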